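/- (Soundness of EXT for □LTL) Let M̃ be the trivial extension of M. For any □LTL formula φ (built from state predicates by the constructors □ψ, □◇ψ, ◇□ψ, and □(χ → ◇ψ) with χ a state predicate): if every trace of M̃ satisfies φ, then every trace of M satisfies φ. -/

import Mathlib

/-- An event is enabled in `s` iff `s` has some successor. -/
def Enabled {S : Type} (next : S → S → Prop) (s : S) : Prop := ∃ s', next s s'

/-- A maximal trace of `M`: states `f 0, f 1, …` of length `len ∈ ℕ∞`
(`⊤` = infinite; a finite trace of length `n` consists of `f 0, …, f n`
and ends in a deadlocked state). -/
def MTrace {S : Type} (next : S → S → Prop) (f : ℕ → S) (len : ℕ∞) : Prop :=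
  (∀ k : ℕ, (k : ℕ∞) < len → next (f k) (f (k + 1))) ∧
  (∀ n : ℕ, len = (n : ℕ∞) → ¬ Enabled next (f n))

/-- The traces of the trivial extension `M̃` of `M`: the infinite traces of
`M`, together with, for each finite trace `S_0, …, S_n` of `M`, the infinite
trace `S_0, …, S_n, S_n, S_n, …`. -/
def ExtTrace {S : Type} (next : S → S → Prop) (g : ℕ → S) : Prop :=
  MTrace next g ⊤ ∨
  ∃ n : ℕ, MTrace next g (n : ℕ∞) ∧ ∀ m : ℕ, n ≤ m → g m = g n

/-- `M` is convergent in `φ`: no trace of `M` has an index `k` (within the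
trace) such that all states at positions `≥ k` satisfy `φ`. -/
def ConvM {S : Type} (next : S → S → Prop) (φ : S → Prop) : Prop :=
  ∀ (f : ℕ → S) (len : ℕ∞), MTrace next f len →
    ¬ ∃ k : ℕ, (k : ℕ∞) ≤ len ∧ ∀ l : ℕ, k ≤ l → (l : ℕ∞) ≤ len → φ (f l)

/-- `M̃` is convergent in `φ`. -/
def ConvExt {S : Type} (next : S → S → Prop) (φ : S → Prop) : Prop :=
  ∀ g : ℕ → S, ExtTrace next g → ¬ ∃ k : ℕ, ∀ l : ℕ, k ≤ l → φ (g l)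

/-- `M` is divergent in `φ`: every infinite trace of `M` has a suffix in
which all states satisfy `φ`. -/
def DivM {S : Type} (next : S → S → Prop) (φ : S → Prop) : Prop :=
  ∀ f : ℕ → S, MTrace next f ⊤ → ∃ k : ℕ, ∀ l : ℕ, k ≤ l → φ (f l)

/-- `M̃` is divergent in `φ` (all traces of `M̃` are infinite). -/
def DivExt {S : Type} (next : S → S → Prop) (φ : S → Prop) : Prop :=
  ∀ g : ℕ → S, ExtTrace next g → ∃ k : ℕ, ∀ l : ℕ, k ≤ l → φ (g l)

/-- The □LTL fragment: formulas built from state predicates by the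
constructors □ψ, □◇ψ, ◇□ψ, and □(χ → ◇ψ) with χ a state predicate. -/
inductive BoxLTL (S : Type) where
  | st : (S → Prop) → BoxLTL S
  | box : BoxLTL S → BoxLTL S
  | boxdia : BoxLTL S → BoxLTL S
  | diabox : BoxLTL S → BoxLTL S
  | prog : (S → Prop) → BoxLTL S → BoxLTL S

/-- Satisfaction of a □LTL formula on a (finite or infinite) trace given by
states `f 0, f 1, …` and length `len ∈ ℕ∞`; suffixes at position `k ≤ len`
are `fun n => f (n + k)` with length `len - k`. -/
def BSat {S : Type} : BoxLTL S → (ℕ → S) → ℕ∞ → Prop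
  | .st P, f, _ => P (f 0)
  | .box ψ, f, len => ∀ k : ℕ, (k : ℕ∞) ≤ len →
      BSat ψ (fun n => f (n + k)) (len - k)
  | .boxdia ψ, f, len => ∀ k : ℕ, (k : ℕ∞) ≤ len →
      ∃ l : ℕ, k ≤ l ∧ (l : ℕ∞) ≤ len ∧ BSat ψ (fun n => f (n + l)) (len - l)
  | .diabox ψ, f, len => ∃ k : ℕ, (k : ℕ∞) ≤ len ∧
      ∀ l : ℕ, k ≤ l → (l : ℕ∞) ≤ len → BSat ψ (fun n => f (n + l)) (len - l)
  | .prog χ ψ, f, len => ∀ k : ℕ, (k : ℕ∞) ≤ len → χ (f k) →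
      ∃ l : ℕ, k ≤ l ∧ (l : ℕ∞) ≤ len ∧ BSat ψ (fun n => f (n + l)) (len - l)


lemma ENat_coe_sub' (m n : ℕ) : ((m - n : ℕ) : ℕ∞) = (m : ℕ∞) - (n : ℕ∞) := by
  simp

lemma stutter_sat {S : Type} : ∀ (φ : BoxLTL S) (n : ℕ) (f : ℕ → S),
    BSat φ (fun m => f (min m n)) ⊤ → BSat φ f (n : ℕ∞) := by
  intro φ
  induction φ with
  | st P =>
    intro n f h
    simpa [BSat] using h
  | box ψ ih =>
    intro n f h k hk
    have hk' : k ≤ n := by exact_mod_cast hk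
    have h1 := h k le_top
    rw [ENat.top_sub_coe] at h1
    have heq : (fun m => f (min (m + k) n)) =
        (fun m => (fun m' => f (m' + k)) (min m (n - k))) := by
      funext m; congr 1; omega
    have := ih (n - k) (fun m' => f (m' + k)) (by rw [← heq]; exact h1)
    rwa [ENat_coe_sub'] at this
  | boxdia ψ ih =>
    intro n f h k hk
    have hk' : k ≤ n := by exact_mod_cast hk
    obtain ⟨l, hkl, -, h1⟩ := h k le_top
    rw [ENat.top_sub_coe] at h1
    refine ⟨min l n, by omega, by exact_mod_cast (by omega : min l n ≤ n), ?_⟩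
    rw [← ENat_coe_sub']
    apply ih
    have heq : (fun m => f (min (m + l) n)) =
        (fun m => (fun m' => f (m' + min l n)) (min m (n - min l n))) := by
      funext m; congr 1; omega
    rw [← heq]; exact h1
  | diabox ψ ih =>
    intro n f h
    obtain ⟨k, -, h1⟩ := h
    refine ⟨min k n, by exact_mod_cast (by omega : min k n ≤ n), ?_⟩
    intro l hkl hln
    have hln' : l ≤ n := by exact_mod_cast hln
    have h2 := h1 (max l k) (le_max_right _ _) le_top
    rw [ENat.top_sub_coe] at h2
    rw [← ENat_coe_sub']
    apply ih
    have heq : (fun m => f (min (m + max l k) n)) =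
        (fun m => (fun m' => f (m' + l)) (min m (n - l))) := by
      funext m; congr 1; omega
    rw [← heq]; exact h2
  | prog χ ψ ih =>
    intro n f h k hk hχ
    have hk' : k ≤ n := by exact_mod_cast hk
    have hχ' : χ (f (min k n)) := by rw [min_eq_left hk']; exact hχ
    obtain ⟨l, hkl, -, h1⟩ := h k le_top hχ'
    rw [ENat.top_sub_coe] at h1
    refine ⟨min l n, by omega, by exact_mod_cast (by omega : min l n ≤ n), ?_⟩
    rw [← ENat_coe_sub']
    apply ih
    have heq : (fun m => f (min (m + l) n)) =
        (fun m => (fun m' => f (m' + min l n)) (min m (n - min l n))) := by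
      funext m; congr 1; omega
    rw [← heq]; exact h1

/-- Soundness of EXT for □LTL: if every trace of the trivial extension `M̃`
satisfies a □LTL formula `φ`, then every trace of `M` satisfies `φ`. -/
theorem ext_sound {S : Type} (next : S → S → Prop) (φ : BoxLTL S)
    (h : ∀ g : ℕ → S, ExtTrace next g → BSat φ g ⊤) :
    ∀ (f : ℕ → S) (len : ℕ∞), MTrace next f len → BSat φ f len := by
  intro f len hM
  cases len with
  | top =>
    exact h f (Or.inl hM)
  | coe n =>
    have hExt : ExtTrace next (fun m => f (min m n)) := by
      refine Or.inr ⟨n, ⟨?_, ?_⟩, ?_⟩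
      · intro k hk
        have hk' : k < n := by exact_mod_cast hk
        have h1 := hM.1 k (by exact_mod_cast hk')
        simpa [min_eq_left hk'.le, min_eq_left (show k + 1 ≤ n from hk')] using h1
      · intro m hm
        have hm' : n = m := by exact_mod_cast hm
        have := hM.2 n rfl
        simpa [← hm'] using this
      · intro m hm; simp [min_eq_right hm]
    exact stutter_sat φ n f (h _ hExt)
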